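/- Let β > 0 and λ > 0, and let φ : (0,β] → [0,1] be a measurable function satisfying φ(x) = 1 − exp(−(x/β)·∫ y·φ(y) dμ̂(y)) for all x ∈ (0,β]. Then, setting c := (1/β)·∫ y·φ(y) dμ̂(y), one has φ(x) = 1 − e^{−cx} for all x ∈ (0,β], and c·G(c) = c. -/

import Mathlib

open Real MeasureTheory
open scoped ENNReal NNReal

noncomputable def muhat (β lam : ℝ) : Measure ℝ :=
  (ENNReal.ofReal ((lam * β + 1) * exp (-(lam * β)))) • Measure.dirac β
    + (volume.restrict (Set.Ioo 0 β)).withDensity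
        (fun x => ENNReal.ofReal (β * lam ^ 2 * exp (-(lam * x))))

lemma muhat_ae (β lam : ℝ) (hβ : 0 < β) : ∀ᵐ y ∂(muhat β lam), y ∈ Set.Ioc (0:ℝ) β := by
  rw [ae_iff]
  have hms : MeasurableSet {y : ℝ | ¬ y ∈ Set.Ioc (0:ℝ) β} :=
    (measurableSet_Ioc).compl
  rw [muhat, Measure.add_apply, Measure.smul_apply, Measure.dirac_apply' _ hms,
    withDensity_apply _ hms, Measure.restrict_restrict hms]
  have h1 : Set.indicator {y : ℝ | ¬ y ∈ Set.Ioc (0:ℝ) β} (1 : ℝ → ℝ≥0∞) β = 0 := by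
    simp [Set.indicator_of_notMem, Set.mem_Ioc, hβ, le_refl]
  have h2 : {y : ℝ | ¬ y ∈ Set.Ioc (0:ℝ) β} ∩ Set.Ioo 0 β = ∅ := by
    ext x
    simp only [Set.mem_inter_iff, Set.mem_setOf_eq, Set.mem_Ioc, Set.mem_Ioo,
      Set.mem_empty_iff_false, iff_false, not_and, not_le]
    intro h h1 h2
    exact lt_asymm h2 (h h1)
  rw [h1, h2]
  simp

lemma integrable_dirac'' {f : ℝ → ℝ} (hf : Measurable f) (a : ℝ) :
    Integrable f (Measure.dirac a) := by
  refine ⟨hf.aestronglyMeasurable, ?_⟩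
  rw [HasFiniteIntegral, lintegral_dirac]
  exact ENNReal.coe_lt_top

lemma integral_muhat (β lam : ℝ) (hβ : 0 < β) (hlam : 0 < lam) (f : ℝ → ℝ)
    (hf : Continuous f) :
    ∫ y, f y ∂(muhat β lam)
      = (lam * β + 1) * exp (-(lam * β)) * f β
        + ∫ y in Set.Ioo (0:ℝ) β, (β * lam ^ 2 * exp (-(lam * y))) * f y := by
  have hd : Measurable fun x : ℝ => (β * lam ^ 2 * exp (-(lam * x))).toNNReal :=
    ((measurable_const.mul ((measurable_const.mul measurable_id).neg.exp))).real_toNNReal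
  have hdens_eq : (fun x : ℝ => ENNReal.ofReal (β * lam ^ 2 * exp (-(lam * x))))
      = fun x : ℝ => ((β * lam ^ 2 * exp (-(lam * x))).toNNReal : ℝ≥0∞) := rfl
  have hint2 : Integrable f ((volume.restrict (Set.Ioo 0 β)).withDensity
      (fun x => ENNReal.ofReal (β * lam ^ 2 * exp (-(lam * x))))) := by
    rw [hdens_eq, integrable_withDensity_iff_integrable_smul hd]
    have : IntegrableOn (fun x : ℝ => ((β * lam ^ 2 * exp (-(lam * x))).toNNReal : ℝ) • f x)
        (Set.Icc 0 β) volume := by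
      apply ContinuousOn.integrableOn_compact isCompact_Icc
      apply Continuous.continuousOn
      have h1 : Continuous fun x : ℝ => ((β * lam ^ 2 * exp (-(lam * x))).toNNReal : ℝ) := by
        have h0 : Continuous fun x : ℝ => β * lam ^ 2 * exp (-(lam * x)) :=
          continuous_const.mul ((continuous_const.mul continuous_id).neg.rexp)
        exact continuous_real_toNNReal.comp h0 |>.subtype_val
      exact h1.smul hf
    exact this.mono_set Set.Ioo_subset_Icc_self
  have hint1 : Integrable f ((ENNReal.ofReal ((lam * β + 1) * exp (-(lam * β)))) •
      Measure.dirac β) := by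
    apply Integrable.smul_measure (integrable_dirac'' hf.measurable β)
    exact ENNReal.ofReal_ne_top
  rw [muhat, integral_add_measure hint1 hint2, integral_smul_measure, integral_dirac,
    hdens_eq, integral_withDensity_eq_integral_smul hd]
  have hpos : 0 ≤ (lam * β + 1) * exp (-(lam * β)) := by positivity
  rw [ENNReal.toReal_ofReal hpos]
  congr 1
  apply setIntegral_congr_fun measurableSet_Ioo
  intro x _
  simp only [NNReal.smul_def, smul_eq_mul]
  rw [Real.coe_toNNReal _ (by positivity)]

lemma int_xexp (t β : ℝ) (ht : t ≠ 0) :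
    ∫ x in (0:ℝ)..β, x * exp (-(t * x)) = (1 - exp (-(t * β)) * (1 + t * β)) / t ^ 2 := by
  have key : ∀ x : ℝ, HasDerivAt (fun x : ℝ => -((x / t + 1 / t ^ 2) * exp (-(t * x))))
      (x * exp (-(t * x))) x := by
    intro x
    have h1 : HasDerivAt (fun x : ℝ => x / t + 1 / t ^ 2) (1 / t) x := by
      have := ((hasDerivAt_id' x).div_const t).add_const (1 / t ^ 2)
      simpa [one_div] using this
    have h2 : HasDerivAt (fun x : ℝ => exp (-(t * x))) (-t * exp (-(t * x))) x := by
      have h0 : HasDerivAt (fun x : ℝ => -(t * x)) (-t) x := by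
        have := ((hasDerivAt_id x).const_mul t).neg; rw [mul_one] at this; exact this
      simpa [mul_comm] using h0.exp
    have : HasDerivAt (fun x : ℝ => -((x / t + 1 / t ^ 2) * exp (-(t * x)))) _ x := (h1.mul h2).neg
    convert this using 1
    field_simp
    ring
  rw [intervalIntegral.integral_eq_sub_of_hasDerivAt (fun x _ => key x)
    ((continuous_id.mul ((continuous_const.mul continuous_id).neg.rexp)).intervalIntegrable 0 β)]
  simp only [mul_zero, neg_zero, Real.exp_zero]
  field_simp
  ring

/-- For `β > 0` and `λ > 0`, if `φ : (0,β] → [0,1]` is measurable and satisfies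
`φ(x) = 1 − exp(−(x/β)·∫ y·φ(y) dμ̂(y))` for all `x ∈ (0,β]`, then with
`c := (1/β)·∫ y·φ(y) dμ̂(y)` one has `φ(x) = 1 − e^{−cx}` on `(0,β]` and `c·G(c) = c`. -/
theorem stmt_10 (β lam : ℝ) (hβ : 0 < β) (hlam : 0 < lam)
    (G : ℝ → ℝ)
    (hG : ∀ g : ℝ, G g = (2 * lam + g) / (lam + g) ^ 2 * (1 - exp (-((lam + g) * β)))
      - lam * β / (lam + g) * exp (-((lam + g) * β)))
    (φ : ℝ → ℝ) (hφmeas : Measurable φ)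
    (hφ01 : ∀ x ∈ Set.Ioc (0:ℝ) β, φ x ∈ Set.Icc (0:ℝ) 1)
    (hfix : ∀ x ∈ Set.Ioc (0:ℝ) β,
      φ x = 1 - exp (-((x / β) * ∫ y, y * φ y ∂(muhat β lam))))
    (c : ℝ) (hc : c = (1 / β) * ∫ y, y * φ y ∂(muhat β lam)) :
    (∀ x ∈ Set.Ioc (0:ℝ) β, φ x = 1 - exp (-(c * x))) ∧ c * G c = c := by
  set I := ∫ y, y * φ y ∂(muhat β lam) with hI
  have hIc : I = β * c := by rw [hc]; field_simp
  have part1 : ∀ x ∈ Set.Ioc (0:ℝ) β, φ x = 1 - exp (-(c * x)) := by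
    intro x hx
    rw [hfix x hx, hIc]
    congr 2
    field_simp
  refine ⟨part1, ?_⟩
  have hae := muhat_ae β lam hβ
  have hc0 : 0 ≤ c := by
    rw [hc]
    apply mul_nonneg (by positivity)
    apply integral_nonneg_of_ae
    filter_upwards [hae] with y hy
    exact mul_nonneg hy.1.le (hφ01 y hy).1
  rcases eq_or_lt_of_le hc0 with h0 | hcpos
  · rw [← h0]; ring
  have hIrw : I = ∫ y, y * (1 - exp (-(c * y))) ∂(muhat β lam) := by
    apply integral_congr_ae
    filter_upwards [hae] with y hy
    rw [part1 y hy]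
  set a := lam + c with ha
  have hapos : 0 < a := by positivity
  have hcomp : I = β * c * G c := by
    have hfc : Continuous fun y : ℝ => y * (1 - exp (-(c * y))) :=
      continuous_id.mul (continuous_const.sub ((continuous_const.mul continuous_id).neg.rexp))
    rw [hIrw, integral_muhat β lam hβ hlam _ hfc]
    have hsplit : (∫ y in Set.Ioo (0:ℝ) β,
        (β * lam ^ 2 * exp (-(lam * y))) * (y * (1 - exp (-(c * y)))))
        = β * lam ^ 2 * ((∫ x in (0:ℝ)..β, x * exp (-(lam * x)))
          - ∫ x in (0:ℝ)..β, x * exp (-(a * x))) := by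
      rw [← intervalIntegral.integral_sub
        (Continuous.intervalIntegrable (by fun_prop) 0 β)
        (Continuous.intervalIntegrable (by fun_prop) 0 β),
        ← intervalIntegral.integral_const_mul,
        intervalIntegral.integral_of_le hβ.le, ← MeasureTheory.integral_Ioc_eq_integral_Ioo]
      apply setIntegral_congr_fun measurableSet_Ioc
      intro x _
      have hxe : exp (-(lam * x)) * exp (-(c * x)) = exp (-(a * x)) := by
        rw [← Real.exp_add, ha]; ring_nf
      simp only [mul_sub]
      rw [← hxe]
      ring
    rw [hsplit, int_xexp lam β hlam.ne', int_xexp a β hapos.ne', hG c]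
    rw [ha]
    have he : exp (-((lam + c) * β)) = exp (-(lam * β)) * exp (-(c * β)) := by
      rw [← Real.exp_add]; ring_nf
    rw [he]
    have hβc : -(c * β) = -(β * c) := by ring
    generalize exp (-(lam * β)) = u
    rw [show (-(c * β)) = -(β * c) from by ring] at *
    generalize exp (-(β * c)) = v
    have hlc : lam + c ≠ 0 := by positivity
    field_simp
    ring
  have hβc : β * c ≠ 0 := by positivity
  have hG1 : G c = 1 :=
    mul_left_cancel₀ hβc (show β * c * G c = β * c * 1 by rw [mul_one, ← hcomp, hIc])
  rw [hG1, mul_one]
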